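/- arXiv:1406.7748 — 4 statements merged into one kernel-verified Lean document; each statement's English description precedes it below -/
import Mathlib

section
/- Define Q : ℝ² → ℂ by Q(ξ,η) = ∫₀¹ e^{isξ} ( ∫₀^s e^{ivη} dv ) ds. Then: (i) for every ξ ≠ 0, Q(ξ,−ξ) = ((1 − cos ξ) + i(ξ − sin ξ))/ξ²; (ii) there is a constant c such that |Q(ξ,η)| ≤ c, |Q(ξ,η)| ≤ c/|ξ|, |Q(ξ,η)| ≤ c/|η|, and |Q(ξ,η)| ≤ c(1/(|ξ||η|) + 1/(|ξ+η| min(|ξ|,|η|))) for all ξ,η ≠ 0 with ξ+η ≠ 0; (iii) for every α ∈ (1/3, 1/2], the integral ∫_{ℝ²} |Q(ξ,η)|² |ξ|^{1−2α} |η|^{1−2α} dξ dη is finite. -/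
open MeasureTheory intervalIntegral Complex

/-- The oscillatory kernel `Q(ξ,η) = ∫₀¹ e^{isξ} (∫₀^s e^{ivη} dv) ds`. -/
noncomputable def Qker (ξ η : ℝ) : ℂ :=
  ∫ s in (0:ℝ)..1, Complex.exp (Complex.I * s * ξ) *
    ∫ v in (0:ℝ)..s, Complex.exp (Complex.I * v * η)

lemma norm_exp_I (x μ : ℝ) : ‖Complex.exp (Complex.I * x * μ)‖ = 1 := by
  simp [Complex.norm_exp]

lemma exp_int (a b μ : ℝ) (hμ : μ ≠ 0) :
    (∫ v in a..b, Complex.exp (Complex.I * v * μ))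
      = (Complex.exp (Complex.I * b * μ) - Complex.exp (Complex.I * a * μ)) / (Complex.I * μ) := by
  have h : ∀ v : ℝ, Complex.I * v * μ = (Complex.I * μ) * v := fun v => by ring
  simp only [h]
  exact integral_exp_mul_complex (by simp [Complex.ext_iff, hμ])

lemma norm_exp_int_le (a b μ : ℝ) :
    ‖∫ v in a..b, Complex.exp (Complex.I * v * μ)‖ ≤ |b - a| := by
  have := intervalIntegral.norm_integral_le_of_norm_le_const
    (C := 1) (f := fun v : ℝ => Complex.exp (Complex.I * v * μ)) (a := a) (b := b)
    (fun x _ => le_of_eq (norm_exp_I x μ))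
  simpa using this

lemma cont_exp (μ : ℝ) : Continuous fun v : ℝ => Complex.exp (Complex.I * v * μ) := by
  fun_prop

/-- Formula for `Qker` when `η ≠ 0`. -/
lemma Qker_eq (ξ η : ℝ) (hη : η ≠ 0) :
    Qker ξ η = (1 / (Complex.I * η)) *
      ((∫ s in (0:ℝ)..1, Complex.exp (Complex.I * s * (ξ + η))) -
        ∫ s in (0:ℝ)..1, Complex.exp (Complex.I * s * ξ)) := by
  have h1 : ∀ s : ℝ, Complex.exp (Complex.I * s * ξ) *
      (∫ v in (0:ℝ)..s, Complex.exp (Complex.I * v * η))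
      = (1 / (Complex.I * η)) * (Complex.exp (Complex.I * s * (ξ + η)) -
          Complex.exp (Complex.I * s * ξ)) := by
    intro s
    rw [exp_int 0 s η hη]
    rw [show Complex.I * (s:ℝ) * (((ξ:ℝ):ℂ) + ((η:ℝ):ℂ)) = Complex.I * s * ξ + Complex.I * s * η by
      ring, Complex.exp_add]
    have hIη : (Complex.I * η) ≠ 0 := by simp [Complex.ext_iff, hη]
    field_simp
    simp
  unfold Qker
  simp only [← Complex.ofReal_add] at h1 ⊢
  simp only [h1]
  rw [intervalIntegral.integral_const_mul, intervalIntegral.integral_sub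
    ((cont_exp _).intervalIntegrable _ _) ((cont_exp _).intervalIntegrable _ _)]

/-- Part (i). -/
lemma part_i (ξ : ℝ) (hξ : ξ ≠ 0) :
    Qker ξ (-ξ) = (((1 - Real.cos ξ : ℝ) : ℂ) +
      Complex.I * ((ξ - Real.sin ξ : ℝ) : ℂ)) / ((ξ : ℂ) ^ 2) := by
  rw [Qker_eq ξ (-ξ) (neg_ne_zero.mpr hξ)]
  have h0 : ∀ s : ℝ, Complex.I * (s:ℝ) * (((ξ:ℝ):ℂ) + ((-ξ:ℝ):ℂ)) = Complex.I * s * ((0:ℝ):ℂ) := by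
    intro s; push_cast; ring
  simp only [h0]
  rw [show ((0:ℝ):ℂ) = (0:ℂ) by norm_num]
  simp only [mul_zero, Complex.exp_zero, intervalIntegral.integral_const]
  rw [exp_int 0 1 ξ hξ]
  have hξC : ((ξ:ℂ)) ≠ 0 := by exact_mod_cast hξ
  have hexp : Complex.exp (Complex.I * (1:ℝ) * ξ) = Real.cos ξ + Real.sin ξ * Complex.I := by
    rw [show Complex.I * ((1:ℝ):ℂ) * ξ = (ξ:ℂ) * Complex.I by push_cast; ring]
    rw [Complex.exp_mul_I]
    simp [← Complex.ofReal_cos, ← Complex.ofReal_sin]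
  rw [hexp]
  have hI : Complex.I ≠ 0 := Complex.I_ne_zero
  rw [show Complex.I * (0:ℝ) * ξ = (0:ℂ) by push_cast; ring, Complex.exp_zero]
  push_cast
  field_simp
  ring_nf
  simp only [Complex.I_sq, show (Complex.I)^3 = -Complex.I from by rw [pow_succ, Complex.I_sq]; ring]
  ring_nf
  simp

/-- `‖Q‖ ≤ 1`. -/
lemma bound_a (ξ η : ℝ) : ‖Qker ξ η‖ ≤ 1 := by
  have := intervalIntegral.norm_integral_le_of_norm_le_const (C := 1)
    (f := fun s : ℝ => Complex.exp (Complex.I * s * ξ) *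
      ∫ v in (0:ℝ)..s, Complex.exp (Complex.I * v * η)) (a := 0) (b := 1) ?_
  · simpa [Qker] using this
  · intro s hs
    rw [Set.uIoc_of_le (by norm_num : (0:ℝ) ≤ 1)] at hs
    rw [norm_mul, norm_exp_I, one_mul]
    calc ‖∫ v in (0:ℝ)..s, Complex.exp (Complex.I * v * η)‖ ≤ |s - 0| := norm_exp_int_le 0 s η
      _ ≤ 1 := by rw [sub_zero, abs_of_pos hs.1]; exact hs.2

/-- `‖Q‖ ≤ 2/|η|` for `η ≠ 0`. -/
lemma bound_b (ξ η : ℝ) (hη : η ≠ 0) : ‖Qker ξ η‖ ≤ 2 / |η| := by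
  rw [Qker_eq ξ η hη]
  rw [norm_mul]
  have h1 : ‖(1:ℂ) / (Complex.I * η)‖ = 1 / |η| := by
    simp [norm_div]
  rw [h1]
  have h2 : ‖(∫ s in (0:ℝ)..1, Complex.exp (Complex.I * s * (ξ + η))) -
      ∫ s in (0:ℝ)..1, Complex.exp (Complex.I * s * ξ)‖ ≤ 2 := by
    refine (norm_sub_le _ _).trans ?_
    have := norm_exp_int_le 0 1 (ξ + η)
    have := norm_exp_int_le 0 1 ξ
    norm_num at *
    linarith
  calc 1 / |η| * ‖_‖ ≤ 1 / |η| * 2 := by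
        apply mul_le_mul_of_nonneg_left h2 (by positivity)
    _ = 2 / |η| := by ring

/-- `‖Q‖ ≤ 2 (1/(|ξ||η|) + 1/(|ξ+η| min))` in the generic case. -/
lemma bound_d (ξ η : ℝ) (hξ : ξ ≠ 0) (hη : η ≠ 0) (hs : ξ + η ≠ 0) :
    ‖Qker ξ η‖ ≤ 2 * (1 / (|ξ| * |η|) + 1 / (|ξ + η| * min |ξ| |η|)) := by
  rw [Qker_eq ξ η hη, norm_mul]
  have h1 : ‖(1:ℂ) / (Complex.I * η)‖ = 1 / |η| := by
    simp [norm_div]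
  rw [h1]
  have hA : ‖∫ s in (0:ℝ)..1, Complex.exp (Complex.I * s * (ξ + η))‖ ≤ 2 / |ξ + η| := by
    rw [show ((ξ:ℂ) + (η:ℂ)) = ((ξ + η : ℝ) : ℂ) by push_cast; ring]
    rw [exp_int 0 1 (ξ + η) hs]
    rw [norm_div]
    have : ‖Complex.exp (Complex.I * (1:ℝ) * (ξ+η:ℝ)) - Complex.exp (Complex.I * (0:ℝ) * (ξ+η:ℝ))‖ ≤ 2 := by
      refine (norm_sub_le _ _).trans ?_
      rw [norm_exp_I, norm_exp_I]; norm_num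
    have hd : ‖Complex.I * ((ξ+η:ℝ):ℂ)‖ = |ξ + η| := by
      rw [norm_mul, Complex.norm_I, one_mul, Complex.norm_real, Real.norm_eq_abs]
    rw [hd]
    exact div_le_div_of_nonneg_right this (abs_pos.mpr hs).le
  have hB : ‖∫ s in (0:ℝ)..1, Complex.exp (Complex.I * s * ξ)‖ ≤ 2 / |ξ| := by
    rw [exp_int 0 1 ξ hξ, norm_div]
    have : ‖Complex.exp (Complex.I * (1:ℝ) * ξ) - Complex.exp (Complex.I * (0:ℝ) * ξ)‖ ≤ 2 := by
      refine (norm_sub_le _ _).trans ?_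
      rw [norm_exp_I, norm_exp_I]; norm_num
    have hd : ‖Complex.I * ((ξ:ℝ):ℂ)‖ = |ξ| := by
      simp
    rw [hd]
    exact div_le_div_of_nonneg_right this (abs_pos.mpr hξ).le
  have hmin : min |ξ| |η| ≤ |η| := min_le_right _ _
  have hηpos : (0:ℝ) < |η| := abs_pos.mpr hη
  have hξpos : (0:ℝ) < |ξ| := abs_pos.mpr hξ
  have hspos : (0:ℝ) < |ξ + η| := abs_pos.mpr hs
  have hminpos : (0:ℝ) < min |ξ| |η| := lt_min hξpos hηpos
  calc 1 / |η| * ‖_ - _‖ ≤ 1 / |η| * (2 / |ξ + η| + 2 / |ξ|) := by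
        apply mul_le_mul_of_nonneg_left _ (by positivity)
        exact (norm_sub_le _ _).trans (add_le_add hA hB)
    _ = 2 / (|ξ + η| * |η|) + 2 / (|ξ| * |η|) := by field_simp
    _ ≤ 2 / (|ξ + η| * min |ξ| |η|) + 2 / (|ξ| * |η|) := by
        gcongr
    _ ≤ 2 * (1 / (|ξ| * |η|) + 1 / (|ξ + η| * min |ξ| |η|)) := by
        rw [mul_add]
        rw [mul_one_div, mul_one_div]
        linarith

/-- `‖Q‖ ≤ 2/|ξ|` for `ξ ≠ 0` (integration by parts). -/
lemma bound_c (ξ η : ℝ) (hξ : ξ ≠ 0) : ‖Qker ξ η‖ ≤ 2 / |ξ| := by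
  set c : ℂ := Complex.I * ξ with hc
  have hcne : c ≠ 0 := by simp [hc, Complex.ext_iff, hξ]
  set g : ℝ → ℂ := fun s => ∫ v in (0:ℝ)..s, Complex.exp (Complex.I * v * η) with hg
  set U : ℝ → ℂ := fun s => Complex.exp (Complex.I * s * ξ) / c with hU
  have hgderiv : ∀ s : ℝ, HasDerivAt g (Complex.exp (Complex.I * s * η)) s := by
    intro s
    have hint : IntervalIntegrable (fun v : ℝ => Complex.exp (Complex.I * v * η)) volume 0 s :=
      (cont_exp η).intervalIntegrable _ _
    exact intervalIntegral.integral_hasDerivAt_right hint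
      ((cont_exp η).stronglyMeasurableAtFilter _ _) (cont_exp η).continuousAt
  have hUderiv : ∀ s : ℝ, HasDerivAt U (Complex.exp (Complex.I * s * ξ)) s := by
    intro s
    have h1 : HasDerivAt (fun z : ℂ => Complex.exp (c * z)) (Complex.exp (c * (s:ℂ)) * c) (s:ℂ) := by
      simpa using ((hasDerivAt_id (s:ℂ)).const_mul c).cexp
    have h2 := (h1.div_const c).comp_ofReal
    have h3 : ∀ t : ℝ, Complex.exp (c * (t:ℂ)) = Complex.exp (Complex.I * t * ξ) := by
      intro t; rw [hc]; ring_nf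
    simpa [hU, h3, mul_div_cancel_right₀ _ hcne] using h2
  have hIBP := intervalIntegral.integral_mul_deriv_eq_deriv_mul_of_hasDerivAt
    (u := g) (v := U) (u' := fun s => Complex.exp (Complex.I * s * η))
    (v' := fun s => Complex.exp (Complex.I * s * ξ)) (a := 0) (b := 1)
    (fun x _ => (hgderiv x).continuousAt.continuousWithinAt)
    (fun x _ => (hUderiv x).continuousAt.continuousWithinAt)
    (fun x _ => hgderiv x) (fun x _ => hUderiv x)
    ((cont_exp η).intervalIntegrable _ _) ((cont_exp ξ).intervalIntegrable _ _)
  have hQ : Qker ξ η = g 1 * U 1 - g 0 * U 0 - ∫ x in (0:ℝ)..1,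
      Complex.exp (Complex.I * x * η) * U x := by
    rw [← hIBP, Qker]
    congr 1
    ext s
    ring
  rw [hQ]
  have hg0 : g 0 = 0 := intervalIntegral.integral_same
  have hnormU : ∀ s : ℝ, ‖U s‖ = 1 / |ξ| := by
    intro s
    have h4 : ‖c‖ = |ξ| := by
      rw [hc]; simp
    rw [show U s = Complex.exp (Complex.I * s * ξ) / c from rfl, norm_div, norm_exp_I, h4]
  have hg1 : ‖g 1‖ ≤ 1 := by simpa using norm_exp_int_le 0 1 η
  have hI2 : ‖∫ x in (0:ℝ)..1, Complex.exp (Complex.I * x * η) * U x‖ ≤ 1 / |ξ| := by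
    have := intervalIntegral.norm_integral_le_of_norm_le_const (C := 1 / |ξ|)
      (f := fun x : ℝ => Complex.exp (Complex.I * x * η) * U x) (a := 0) (b := 1) ?_
    · simpa using this
    · intro x _
      rw [norm_mul, norm_exp_I, one_mul, hnormU]
  calc ‖g 1 * U 1 - g 0 * U 0 - _‖
      ≤ ‖g 1 * U 1 - g 0 * U 0‖ + ‖∫ x in (0:ℝ)..1, Complex.exp (Complex.I * x * η) * U x‖ :=
        norm_sub_le _ _
    _ ≤ 1 / |ξ| + 1 / |ξ| := by
        rw [hg0, zero_mul, sub_zero, norm_mul, hnormU]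
        exact add_le_add (mul_le_of_le_one_left (by positivity) hg1) hI2
    _ = 2 / |ξ| := by ring

noncomputable def mw (x : ℝ) : ℝ := (max 1 |x|)⁻¹

lemma mw_pos (x : ℝ) : 0 < mw x := by
  unfold mw; positivity

lemma mw_le_one (x : ℝ) : mw x ≤ 1 := by
  unfold mw
  rw [inv_le_one_iff₀]
  right; exact le_max_left _ _

lemma mw_cont : Continuous mw :=
  (continuous_const.max (_root_.continuous_abs)).inv₀ (fun x => by positivity)

lemma mw_eq (x : ℝ) (h : 1 ≤ |x|) : mw x = |x|⁻¹ := by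
  unfold mw; rw [max_eq_right h]

lemma mw_eq_one (x : ℝ) (h : |x| ≤ 1) : mw x = 1 := by
  unfold mw; rw [max_eq_left h]; simp

lemma mw_neg (x : ℝ) : mw (-x) = mw x := by unfold mw; rw [abs_neg]

/-- integrability of `mw x ^ 2 * |x| ^ γ` for `0 ≤ γ < 1`. -/
lemma integ_mw (γ : ℝ) (h0 : 0 ≤ γ) (h1 : γ < 1) :
    Integrable (fun x : ℝ => mw x ^ 2 * |x| ^ γ) := by
  have hcont : Continuous (fun x : ℝ => mw x ^ 2 * |x| ^ γ) :=
    ((mw_cont.pow 2).mul ((Real.continuous_rpow_const h0).comp (_root_.continuous_abs)))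
  have hIoi : IntegrableOn (fun x : ℝ => mw x ^ 2 * |x| ^ γ) (Set.Ioi 1) := by
    have hg : IntegrableOn (fun x : ℝ => x ^ (γ - 2)) (Set.Ioi 1) :=
      integrableOn_Ioi_rpow_of_lt (by linarith) one_pos
    refine Integrable.mono' hg (hcont.aestronglyMeasurable.restrict) ?_
    rw [ae_restrict_iff' measurableSet_Ioi]
    filter_upwards with x hx
    have hx1 : (1:ℝ) < x := hx
    have hxpos : (0:ℝ) < x := by linarith
    have habs : |x| = x := _root_.abs_of_pos hxpos
    rw [Real.norm_eq_abs, _root_.abs_of_nonneg (by positivity)]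
    rw [mw_eq x (by rw [habs]; linarith), habs]
    rw [Real.rpow_sub hxpos]
    rw [show (2:ℝ) = ((2:ℕ):ℝ) by norm_num, Real.rpow_natCast]
    rw [inv_pow, div_eq_mul_inv, mul_comm]
  have hneg : IntegrableOn (fun x : ℝ => mw x ^ 2 * |x| ^ γ) (Set.Iio (-1)) := by
    rw [← (Measure.measurePreserving_neg (volume : Measure ℝ)).integrableOn_comp_preimage
        (Homeomorph.neg ℝ).measurableEmbedding]
    have hpre : (Neg.neg ⁻¹' Set.Iio (-1 : ℝ)) = Set.Ioi 1 := by
      ext x; simp only [Set.mem_preimage, Set.mem_Iio, Set.mem_Ioi]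
      constructor <;> intro h <;> linarith
    simp only [Function.comp_def, mw_neg, abs_neg, hpre]
    exact hIoi
  have hmid : IntegrableOn (fun x : ℝ => mw x ^ 2 * |x| ^ γ) (Set.Icc (-1) 1) :=
    hcont.continuousOn.integrableOn_compact isCompact_Icc
  rw [← integrableOn_univ]
  have huniv : (Set.univ : Set ℝ) = Set.Iio (-1) ∪ (Set.Icc (-1) 1 ∪ Set.Ioi 1) := by
    ext x; simp only [Set.mem_univ, Set.mem_union, Set.mem_Iio, Set.mem_Icc, Set.mem_Ioi, true_iff]
    rcases lt_or_ge x (-1) with h | h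
    · exact Or.inl h
    · rcases le_or_gt x 1 with h' | h'
      · exact Or.inr (Or.inl ⟨h, h'⟩)
      · exact Or.inr (Or.inr h')
  rw [huniv]
  exact hneg.union (hmid.union hIoi)

/-- `‖Q‖ ≤ 2 * mw ξ`. -/
lemma bound_mw_left (ξ η : ℝ) : ‖Qker ξ η‖ ≤ 2 * mw ξ := by
  rcases le_or_gt |ξ| 1 with h | h
  · rw [mw_eq_one ξ h]
    calc ‖Qker ξ η‖ ≤ 1 := bound_a ξ η
      _ ≤ 2 * 1 := by norm_num
  · have hξ : ξ ≠ 0 := by intro h0; rw [h0] at h; simp at h; linarith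
    rw [mw_eq ξ h.le]
    calc ‖Qker ξ η‖ ≤ 2 / |ξ| := bound_c ξ η hξ
      _ = 2 * |ξ|⁻¹ := by rw [div_eq_mul_inv]

/-- `‖Q‖ ≤ 2 * mw η`. -/
lemma bound_mw_right (ξ η : ℝ) : ‖Qker ξ η‖ ≤ 2 * mw η := by
  rcases le_or_gt |η| 1 with h | h
  · rw [mw_eq_one η h]
    calc ‖Qker ξ η‖ ≤ 1 := bound_a ξ η
      _ ≤ 2 * 1 := by norm_num
  · have hη : η ≠ 0 := by intro h0; rw [h0] at h; simp at h; linarith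
    rw [mw_eq η h.le]
    calc ‖Qker ξ η‖ ≤ 2 / |η| := bound_b ξ η hη
      _ = 2 * |η|⁻¹ := by rw [div_eq_mul_inv]

/-- Master bound. -/
lemma master (ξ η : ℝ) :
    ‖Qker ξ η‖ ≤ 2 * (mw ξ * mw η + mw (ξ + η) * max (mw ξ) (mw η)) := by
  have hQ0 : 0 ≤ ‖Qker ξ η‖ := norm_nonneg _
  rcases le_or_gt |ξ| 1 with hξ1 | hξ1
  · -- mw ξ = 1
    rw [mw_eq_one ξ hξ1]
    have h2 : 0 ≤ mw (ξ + η) * max 1 (mw η) :=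
      mul_nonneg (mw_pos _).le (le_max_of_le_left zero_le_one)
    have := bound_mw_right ξ η
    linarith
  rcases le_or_gt |η| 1 with hη1 | hη1
  · rw [mw_eq_one η hη1]
    have h2 : 0 ≤ mw (ξ + η) * max (mw ξ) 1 :=
      mul_nonneg (mw_pos _).le (le_max_of_le_right zero_le_one)
    have := bound_mw_left ξ η
    have h3 := mw_le_one ξ
    have h4 := (mw_pos ξ).le
    linarith
  · -- |ξ| > 1, |η| > 1
    have hξ : ξ ≠ 0 := by intro h0; rw [h0] at hξ1; simp at hξ1; linarith
    have hη : η ≠ 0 := by intro h0; rw [h0] at hη1; simp at hη1; linarith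
    have hmwξ : mw ξ = |ξ|⁻¹ := mw_eq ξ hξ1.le
    have hmwη : mw η = |η|⁻¹ := mw_eq η hη1.le
    rcases le_or_gt |ξ + η| 1 with hs1 | hs1
    · -- use ‖Q‖ ≤ 2 mw ξ; RHS second term = max ≥ mw ξ
      rw [mw_eq_one (ξ + η) hs1, one_mul]
      have := bound_mw_left ξ η
      have hmax : mw ξ ≤ max (mw ξ) (mw η) := le_max_left _ _
      have h2 : 0 ≤ mw ξ * mw η := mul_nonneg (mw_pos _).le (mw_pos _).le
      linarith
    · have hs : ξ + η ≠ 0 := by intro h0; rw [h0] at hs1; simp only [abs_zero] at hs1; linarith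
      have hd := bound_d ξ η hξ hη hs
      have hmin : min |ξ| |η| = (max (mw ξ) (mw η))⁻¹ := by
        rw [hmwξ, hmwη]
        rcases le_total |ξ| |η| with h | h
        · rw [min_eq_left h, max_eq_left (by
            exact inv_anti₀ (by positivity) h), inv_inv]
        · rw [min_eq_right h, max_eq_right (by
            exact inv_anti₀ (by positivity) h), inv_inv]
      have hmaxpos : 0 < max (mw ξ) (mw η) := lt_max_of_lt_left (mw_pos ξ)
      have hseq : mw (ξ + η) = |ξ + η|⁻¹ := mw_eq (ξ + η) hs1.le
      calc ‖Qker ξ η‖ ≤ 2 * (1 / (|ξ| * |η|) + 1 / (|ξ + η| * min |ξ| |η|)) := hd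
        _ = 2 * (mw ξ * mw η + mw (ξ + η) * max (mw ξ) (mw η)) := by
            rw [hmin, hmwξ, hmwη, hseq]
            rw [one_div, one_div, mul_inv, mul_inv, inv_inv]

lemma rpow_subadd (a b p : ℝ) (ha : 0 ≤ a) (hb : 0 ≤ b) (hp0 : 0 ≤ p) (hp1 : p ≤ 1) :
    (a + b) ^ p ≤ a ^ p + b ^ p := by
  have h := NNReal.rpow_add_le_add_rpow (a.toNNReal) (b.toNNReal) hp0 hp1
  have h2 : ((a.toNNReal + b.toNNReal : NNReal) : ℝ) = a + b := by
    push_cast [Real.coe_toNNReal a ha, Real.coe_toNNReal b hb]; ring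
  calc (a + b) ^ p = (((a.toNNReal + b.toNNReal : NNReal) : ℝ)) ^ p := by rw [h2]
    _ = (((a.toNNReal + b.toNNReal : NNReal) ^ p : NNReal) : ℝ) := by
        rw [NNReal.coe_rpow]
    _ ≤ ((a.toNNReal ^ p + b.toNNReal ^ p : NNReal) : ℝ) := by exact_mod_cast h
    _ = a ^ p + b ^ p := by
        push_cast [NNReal.coe_rpow, Real.coe_toNNReal a ha, Real.coe_toNNReal b hb]; ring

lemma real_key (Qn p q r a b c : ℝ) (hQn : 0 ≤ Qn) (hp : 0 ≤ p) (hq : 0 ≤ q) (hr : 0 ≤ r)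
    (ha : 0 ≤ a) (hb : 0 ≤ b) (hc : 0 ≤ c)
    (hQ : Qn ≤ 2 * (p * q + r * max p q)) (hba : b ≤ c + a) (hab : a ≤ c + b) :
    Qn ^ 2 * a * b ≤ 8 * ((p^2*a) * (q^2*b) + ((p^2*a) * (r^2*c) + (p^2*a^2) * r^2
      + ((q^2*b) * (r^2*c) + (q^2*b^2) * r^2))) := by
  set M := max p q with hM
  have hM0 : 0 ≤ M := le_trans hp (le_max_left _ _)
  have hM2 : M ^ 2 ≤ p ^ 2 + q ^ 2 := by
    rcases max_cases p q with ⟨h1, _⟩ | ⟨h1, _⟩ <;> rw [hM, h1] <;> nlinarith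
  have hRHS : 0 ≤ 2 * (p * q + r * M) := by positivity
  calc Qn ^ 2 * a * b = Qn ^ 2 * (a * b) := by ring
    _ ≤ (2 * (p * q + r * M)) ^ 2 * (a * b) :=
        mul_le_mul_of_nonneg_right (pow_le_pow_left₀ hQn hQ 2) (mul_nonneg ha hb)
    _ ≤ (8 * ((p*q)^2 + (r*M)^2)) * (a * b) :=
        mul_le_mul_of_nonneg_right (by nlinarith [sq_nonneg (p*q - r*M)]) (mul_nonneg ha hb)
    _ = 8 * ((p*q)^2 * (a*b)) + 8 * (M^2 * (r^2 * (a*b))) := by ring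
    _ ≤ 8 * ((p*q)^2 * (a*b)) + 8 * ((p^2 + q^2) * (r^2 * (a*b))) := by
        have := mul_le_mul_of_nonneg_right hM2
          (mul_nonneg (sq_nonneg r) (mul_nonneg ha hb))
        linarith
    _ = 8 * ((p^2*a) * (q^2*b)) + 8 * ((p^2*a) * (r^2*b)) + 8 * ((q^2*b) * (r^2*a)) := by ring
    _ ≤ 8 * ((p^2*a) * (q^2*b)) + 8 * ((p^2*a) * (r^2*(c+a))) + 8 * ((q^2*b) * (r^2*(c+b))) := by
        have h3 : (p^2*a) * (r^2*b) ≤ (p^2*a) * (r^2*(c+a)) :=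
          mul_le_mul_of_nonneg_left (mul_le_mul_of_nonneg_left hba (sq_nonneg r))
            (mul_nonneg (sq_nonneg p) ha)
        have h4 : (q^2*b) * (r^2*a) ≤ (q^2*b) * (r^2*(c+b)) :=
          mul_le_mul_of_nonneg_left (mul_le_mul_of_nonneg_left hab (sq_nonneg r))
            (mul_nonneg (sq_nonneg q) hb)
        linarith
    _ = 8 * ((p^2*a) * (q^2*b) + ((p^2*a) * (r^2*c) + (p^2*a^2) * r^2
        + ((q^2*b) * (r^2*c) + (q^2*b^2) * r^2))) := by ring

noncomputable def Phi (γ : ℝ) (x : ℝ) : ENNReal := ENNReal.ofReal (mw x ^ 2 * |x| ^ γ)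

lemma Phi_meas (γ : ℝ) (h0 : 0 ≤ γ) : Measurable (Phi γ) :=
  ENNReal.measurable_ofReal.comp
    ((mw_cont.pow 2).mul ((Real.continuous_rpow_const h0).comp _root_.continuous_abs)).measurable

lemma Phi_fin (γ : ℝ) (h0 : 0 ≤ γ) (h1 : γ < 1) : ∫⁻ x, Phi γ x < ⊤ := by
  have h := (integ_mw γ h0 h1).hasFiniteIntegral
  rwa [hasFiniteIntegral_iff_ofReal] at h
  filter_upwards with x
  positivity

lemma Phi_mul (γ δ x y : ℝ) :
    Phi γ x * Phi δ y = ENNReal.ofReal ((mw x ^ 2 * |x| ^ γ) * (mw y ^ 2 * |y| ^ δ)) :=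
  (ENNReal.ofReal_mul (by positivity)).symm

lemma fin_prod_1 {F G : ℝ → ENNReal} (hF : Measurable F) (hG : Measurable G)
    (hFf : ∫⁻ x, F x < ⊤) (hGf : ∫⁻ x, G x < ⊤) :
    ∫⁻ q : ℝ × ℝ, F q.1 * G q.2 < ⊤ := by
  rw [MeasureTheory.Measure.volume_eq_prod, lintegral_prod_mul hF.aemeasurable hG.aemeasurable]
  exact ENNReal.mul_lt_top hFf hGf

lemma fin_prod_2 {F G : ℝ → ENNReal} (hF : Measurable F) (hG : Measurable G)
    (hFt : ∀ x, F x ≠ ⊤) (hFf : ∫⁻ x, F x < ⊤) (hGf : ∫⁻ x, G x < ⊤) :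
    ∫⁻ q : ℝ × ℝ, F q.1 * G (q.1 + q.2) < ⊤ := by
  rw [MeasureTheory.Measure.volume_eq_prod]
  rw [lintegral_prod (fun q : ℝ × ℝ => F q.1 * G (q.1 + q.2))
    (((hF.comp measurable_fst).mul
      (hG.comp (measurable_fst.add measurable_snd))).aemeasurable)]
  have hkey : (∫⁻ x : ℝ, ∫⁻ y : ℝ, F x * G (x + y)) < ⊤ := by
    calc ∫⁻ x : ℝ, ∫⁻ y : ℝ, F x * G (x + y)
        = ∫⁻ x : ℝ, F x * ∫⁻ y : ℝ, G y := by
          apply lintegral_congr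
          intro x
          rw [lintegral_const_mul' _ _ (hFt x)]
          congr 1
          exact lintegral_add_left_eq_self G x
      _ = (∫⁻ x : ℝ, F x) * ∫⁻ y : ℝ, G y := lintegral_mul_const' _ _ hGf.ne
      _ < ⊤ := ENNReal.mul_lt_top hFf hGf
  exact hkey

lemma fin_prod_3 {F G : ℝ → ENNReal} (hF : Measurable F) (hG : Measurable G)
    (hFt : ∀ x, F x ≠ ⊤) (hFf : ∫⁻ x, F x < ⊤) (hGf : ∫⁻ x, G x < ⊤) :
    ∫⁻ q : ℝ × ℝ, F q.2 * G (q.1 + q.2) < ⊤ := by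
  rw [MeasureTheory.Measure.volume_eq_prod]
  rw [lintegral_prod_symm (fun q : ℝ × ℝ => F q.2 * G (q.1 + q.2))
    (((hF.comp measurable_snd).mul
      (hG.comp (measurable_fst.add measurable_snd))).aemeasurable)]
  have hkey : (∫⁻ y : ℝ, ∫⁻ x : ℝ, F y * G (x + y)) < ⊤ := by
    calc ∫⁻ y : ℝ, ∫⁻ x : ℝ, F y * G (x + y)
        = ∫⁻ y : ℝ, F y * ∫⁻ x : ℝ, G x := by
          apply lintegral_congr
          intro y
          rw [lintegral_const_mul' _ _ (hFt y)]
          congr 1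
          exact lintegral_add_right_eq_self G y
      _ = (∫⁻ y : ℝ, F y) * ∫⁻ x : ℝ, G x := lintegral_mul_const' _ _ hGf.ne
      _ < ⊤ := ENNReal.mul_lt_top hFf hGf
  exact hkey

lemma part_iii (α : ℝ) (hα1 : 1/3 < α) (hα2 : α ≤ 1/2) :
    (∫⁻ q : ℝ × ℝ,
      ENNReal.ofReal (‖Qker q.1 q.2‖ ^ 2 * |q.1| ^ (1 - 2*α) * |q.2| ^ (1 - 2*α))) < ⊤ := by
  set β := 1 - 2*α with hβ
  have hβ0 : 0 ≤ β := by rw [hβ]; linarith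
  have hβle1 : β ≤ 1 := by rw [hβ]; linarith
  have hβlt1 : β < 1 := by rw [hβ]; linarith
  have h2β0 : 0 ≤ 2*β := by linarith
  have h2β1 : 2*β < 1 := by rw [hβ]; linarith
  have key : ∀ q : ℝ × ℝ, ENNReal.ofReal (‖Qker q.1 q.2‖ ^ 2 * |q.1| ^ β * |q.2| ^ β)
      ≤ 8 * (Phi β q.1 * Phi β q.2 + (Phi β q.1 * Phi β (q.1 + q.2)
        + Phi (2*β) q.1 * Phi 0 (q.1 + q.2)
        + (Phi β q.2 * Phi β (q.1 + q.2) + Phi (2*β) q.2 * Phi 0 (q.1 + q.2)))) := by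
    rintro ⟨ξ, η⟩
    have hba : |η| ^ β ≤ |ξ + η| ^ β + |ξ| ^ β := by
      calc |η| ^ β ≤ (|ξ + η| + |ξ|) ^ β := by
            apply Real.rpow_le_rpow (abs_nonneg _) _ hβ0
            calc |η| = |(ξ + η) - ξ| := by ring_nf
              _ ≤ |ξ + η| + |ξ| := abs_sub _ _
        _ ≤ |ξ + η| ^ β + |ξ| ^ β := rpow_subadd _ _ β (abs_nonneg _) (abs_nonneg _) hβ0 hβle1
    have hab : |ξ| ^ β ≤ |ξ + η| ^ β + |η| ^ β := by
      calc |ξ| ^ β ≤ (|ξ + η| + |η|) ^ β := by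
            apply Real.rpow_le_rpow (abs_nonneg _) _ hβ0
            calc |ξ| = |(ξ + η) - η| := by ring_nf
              _ ≤ |ξ + η| + |η| := abs_sub _ _
        _ ≤ |ξ + η| ^ β + |η| ^ β := rpow_subadd _ _ β (abs_nonneg _) (abs_nonneg _) hβ0 hβle1
    have hreal := real_key ‖Qker ξ η‖ (mw ξ) (mw η) (mw (ξ+η)) (|ξ|^β) (|η|^β) (|ξ+η|^β)
      (norm_nonneg _) (mw_pos _).le (mw_pos _).le (mw_pos _).le
      (by positivity) (by positivity) (by positivity) (master ξ η) hba hab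
    have e1 : (|ξ|^β)^2 = |ξ|^(2*β) := by
      rw [← Real.rpow_natCast (|ξ|^β) 2, ← Real.rpow_mul (abs_nonneg _)]
      norm_num [mul_comm]
    have e2 : (|η|^β)^2 = |η|^(2*β) := by
      rw [← Real.rpow_natCast (|η|^β) 2, ← Real.rpow_mul (abs_nonneg _)]
      norm_num [mul_comm]
    calc ENNReal.ofReal (‖Qker ξ η‖ ^ 2 * |ξ| ^ β * |η| ^ β)
        ≤ ENNReal.ofReal (8 * ((mw ξ^2*(|ξ|^β)) * (mw η^2*(|η|^β))
          + ((mw ξ^2*(|ξ|^β)) * (mw (ξ+η)^2*(|ξ+η|^β)) + (mw ξ^2*(|ξ|^β)^2) * mw (ξ+η)^2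
          + ((mw η^2*(|η|^β)) * (mw (ξ+η)^2*(|ξ+η|^β)) + (mw η^2*(|η|^β)^2) * mw (ξ+η)^2)))) :=
          ENNReal.ofReal_le_ofReal hreal
      _ = 8 * (Phi β ξ * Phi β η + (Phi β ξ * Phi β (ξ + η)
          + Phi (2*β) ξ * Phi 0 (ξ + η)
          + (Phi β η * Phi β (ξ + η) + Phi (2*β) η * Phi 0 (ξ + η)))) := by
          rw [Phi_mul β β ξ η, Phi_mul β β ξ (ξ+η), Phi_mul (2*β) 0 ξ (ξ+η),
            Phi_mul β β η (ξ+η), Phi_mul (2*β) 0 η (ξ+η)]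
          rw [← ENNReal.ofReal_add (by positivity) (by positivity),
            ← ENNReal.ofReal_add (by positivity) (by positivity),
            ← ENNReal.ofReal_add (by positivity) (by positivity),
            ← ENNReal.ofReal_add (by positivity) (by positivity)]
          rw [ENNReal.ofReal_mul (by norm_num : (0:ℝ) ≤ 8)]
          congr 1
          · exact ENNReal.ofReal_ofNat 8
          congr 1
          rw [Real.rpow_zero, ← e1, ← e2]
          ring
  have mβ : Measurable (Phi β) := Phi_meas β hβ0
  have m2β : Measurable (Phi (2*β)) := Phi_meas (2*β) h2β0
  have m0 : Measurable (Phi 0) := Phi_meas 0 le_rfl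
  have fβ : ∫⁻ x, Phi β x < ⊤ := Phi_fin β hβ0 hβlt1
  have f2β : ∫⁻ x, Phi (2*β) x < ⊤ := Phi_fin (2*β) h2β0 h2β1
  have f0 : ∫⁻ x, Phi 0 x < ⊤ := Phi_fin 0 le_rfl one_pos
  have hnt : ∀ γ x, Phi γ x ≠ ⊤ := fun γ x => ENNReal.ofReal_ne_top
  calc ∫⁻ q : ℝ × ℝ, ENNReal.ofReal (‖Qker q.1 q.2‖ ^ 2 * |q.1| ^ β * |q.2| ^ β)
      ≤ ∫⁻ q : ℝ × ℝ, 8 * (Phi β q.1 * Phi β q.2 + (Phi β q.1 * Phi β (q.1 + q.2)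
        + Phi (2*β) q.1 * Phi 0 (q.1 + q.2)
        + (Phi β q.2 * Phi β (q.1 + q.2) + Phi (2*β) q.2 * Phi 0 (q.1 + q.2)))) :=
        lintegral_mono key
    _ < ⊤ := by
        rw [lintegral_const_mul' _ _ (by norm_num : (8:ENNReal) ≠ ⊤)]
        refine ENNReal.mul_lt_top (by norm_num) ?_
        have hm1 : Measurable (fun q : ℝ × ℝ => Phi β q.1 * Phi β q.2) :=
          (mβ.comp measurable_fst).mul (mβ.comp measurable_snd)
        have hm2 : Measurable (fun q : ℝ × ℝ => Phi β q.1 * Phi β (q.1 + q.2)) :=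
          (mβ.comp measurable_fst).mul (mβ.comp (measurable_fst.add measurable_snd))
        have hm3 : Measurable (fun q : ℝ × ℝ => Phi (2*β) q.1 * Phi 0 (q.1 + q.2)) :=
          (m2β.comp measurable_fst).mul (m0.comp (measurable_fst.add measurable_snd))
        have hm4 : Measurable (fun q : ℝ × ℝ => Phi β q.2 * Phi β (q.1 + q.2)) :=
          (mβ.comp measurable_snd).mul (mβ.comp (measurable_fst.add measurable_snd))
        rw [lintegral_add_left hm1, lintegral_add_left (f := fun q : ℝ × ℝ => Phi β q.1 * Phi β (q.1 + q.2) + Phi (2*β) q.1 * Phi 0 (q.1 + q.2)) (hm2.add hm3),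
          lintegral_add_left hm2, lintegral_add_left hm4]
        have t1 := fin_prod_1 mβ mβ fβ fβ
        have t2 := fin_prod_2 mβ mβ (hnt β) fβ fβ
        have t3 := fin_prod_2 m2β m0 (hnt (2*β)) f2β f0
        have t4 := fin_prod_3 mβ mβ (hnt β) fβ fβ
        have t5 := fin_prod_3 m2β m0 (hnt (2*β)) f2β f0
        exact ENNReal.add_lt_top.mpr ⟨t1, ENNReal.add_lt_top.mpr
          ⟨ENNReal.add_lt_top.mpr ⟨t2, t3⟩, ENNReal.add_lt_top.mpr ⟨t4, t5⟩⟩⟩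

/-- **Estimates on the kernel `Q`.**
(i) `Q(ξ,−ξ) = ((1 − cos ξ) + i(ξ − sin ξ))/ξ²` for `ξ ≠ 0`;
(ii) uniform bounds `|Q| ≤ c`, `|Q| ≤ c/|ξ|`, `|Q| ≤ c/|η|` and
`|Q| ≤ c(1/(|ξ||η|) + 1/(|ξ+η| min(|ξ|,|η|)))`;
(iii) for `α ∈ (1/3, 1/2]`, `∫_{ℝ²} |Q(ξ,η)|² |ξ|^{1−2α} |η|^{1−2α} dξ dη < ∞`. -/
theorem stmt10 :
    (∀ ξ : ℝ, ξ ≠ 0 →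
      Qker ξ (-ξ) = (((1 - Real.cos ξ : ℝ) : ℂ) +
        Complex.I * ((ξ - Real.sin ξ : ℝ) : ℂ)) / ((ξ : ℂ) ^ 2)) ∧
    (∃ c : ℝ, ∀ ξ η : ℝ,
      ‖Qker ξ η‖ ≤ c ∧
      (ξ ≠ 0 → ‖Qker ξ η‖ ≤ c / |ξ|) ∧
      (η ≠ 0 → ‖Qker ξ η‖ ≤ c / |η|) ∧
      (ξ ≠ 0 → η ≠ 0 → ξ + η ≠ 0 →
        ‖Qker ξ η‖ ≤ c * (1 / (|ξ| * |η|) + 1 / (|ξ + η| * min |ξ| |η|)))) ∧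
    (∀ α : ℝ, 1/3 < α → α ≤ 1/2 →
      (∫⁻ q : ℝ × ℝ,
        ENNReal.ofReal (‖Qker q.1 q.2‖ ^ 2 * |q.1| ^ (1 - 2*α) * |q.2| ^ (1 - 2*α)))
        < ⊤) := by
  refine ⟨part_i, ⟨2, fun ξ η => ⟨(bound_a ξ η).trans (by norm_num),
    fun hξ => bound_c ξ η hξ, fun hη => bound_b ξ η hη,
    fun hξ hη hs => bound_d ξ η hξ hη hs⟩⟩, part_iii⟩
end

section
/- Let V be a Banach space, T > 0 and k ≥ 1. Then: (i) δ(δg) = 0 for every g ∈ 𝒞_k(V); (ii) conversely, for every h ∈ 𝒞_{k+1}(V) with δh = 0 there exists g ∈ 𝒞_k(V) with δg = h. In other words, the complex (𝒞_*(V), δ) of increments is acyclic: every k-cocycle (k ≥ 2) is a coboundary. -/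
open Set

/-- The cube `[0,T]^k`. -/
def cube (T : ℝ) (k : ℕ) : Set (Fin k → ℝ) := {t | ∀ j, t j ∈ Set.Icc 0 T}

/-- Membership in `𝒞_k(V)`: continuity on `[0,T]^k` and vanishing whenever two
consecutive arguments coincide. -/
def IsIncrement {V : Type*} [NormedAddCommGroup V] (T : ℝ) (k : ℕ)
    (g : (Fin k → ℝ) → V) : Prop :=
  ContinuousOn g (cube T k) ∧
  ∀ t ∈ cube T k, (∃ i j : Fin k, (j : ℕ) = (i : ℕ) + 1 ∧ t i = t j) → g t = 0

/-- The coboundary `δ : 𝒞_k(V) → 𝒞_{k+1}(V)`,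
`(δg)(t₁,…,t_{k+1}) = Σ_{i=1}^{k+1} (−1)^{i+1} g(t₁,…,t̂_i,…,t_{k+1})`. -/
noncomputable def cob {V : Type*} [NormedAddCommGroup V] [NormedSpace ℝ V] {k : ℕ}
    (g : (Fin k → ℝ) → V) : (Fin (k + 1) → ℝ) → V :=
  fun t => ∑ i : Fin (k + 1), ((-1 : ℝ) ^ (i : ℕ)) • g (fun j => t (i.succAbove j))

lemma val_succAbove' {n : ℕ} (p : Fin (n+1)) (i : Fin n) :
    ((p.succAbove i : Fin (n+1)) : ℕ) = if (i:ℕ) < (p:ℕ) then (i:ℕ) else (i:ℕ)+1 := by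
  unfold Fin.succAbove
  split_ifs with h1 h2 h2 <;>
    simp_all [Fin.lt_def, Fin.val_succ, Fin.coe_castSucc] <;> omega

lemma key {n : ℕ} (a : Fin (n+2)) (b : Fin (n+1)) (h : (b:ℕ) < (a:ℕ)) (c : Fin n)
    (ha : a ≠ 0) :
    a.succAbove (b.succAbove c) = (b.castSucc).succAbove ((a.pred ha).succAbove c) := by
  apply Fin.ext
  simp only [val_succAbove', Fin.coe_castSucc, Fin.coe_pred]
  split_ifs <;> omega

lemma cob_cob {V : Type*} [NormedAddCommGroup V] [NormedSpace ℝ V] {k : ℕ}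
    (g : (Fin k → ℝ) → V) (t : Fin (k + 2) → ℝ) : cob (cob g) t = 0 := by
  have expand : cob (cob g) t =
      ∑ p : Fin (k + 2) × Fin (k + 1),
        ((-1 : ℝ) ^ ((p.1 : ℕ) + (p.2 : ℕ))) •
          g (fun c => t (p.1.succAbove (p.2.succAbove c))) := by
    rw [Fintype.sum_prod_type]
    simp only [cob, Finset.smul_sum, smul_smul, pow_add]
  rw [expand]
  set F : Fin (k + 2) × Fin (k + 1) → V := fun p =>
    ((-1 : ℝ) ^ ((p.1 : ℕ) + (p.2 : ℕ))) •
      g (fun c => t (p.1.succAbove (p.2.succAbove c))) with hF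
  have ha0 : ∀ (a : Fin (k+2)) (b : Fin (k+1)), (b:ℕ) < (a:ℕ) → a ≠ 0 := by
    intro a b h hc
    rw [hc] at h; simp at h
  refine Finset.sum_involution
    (g := fun p _ => if h : (p.2 : ℕ) < (p.1 : ℕ)
      then (p.2.castSucc, p.1.pred (ha0 p.1 p.2 h))
      else (p.2.succ, ⟨(p.1 : ℕ), by omega⟩)) ?_ ?_ ?_ ?_
  · rintro ⟨a, b⟩ _
    by_cases h : (b : ℕ) < (a : ℕ)
    · simp only [dif_pos h]
      have harg : (fun c => t (a.succAbove (b.succAbove c))) =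
          (fun c => t ((b.castSucc).succAbove ((a.pred (ha0 a b h)).succAbove c))) := by
        funext c; rw [key a b h c (ha0 a b h)]
      have hsign : ((a : ℕ) + (b : ℕ)) = ((b.castSucc : ℕ) + ((a.pred (ha0 a b h)) : ℕ)) + 1 := by
        simp only [Fin.coe_castSucc, Fin.coe_pred]; omega
      simp only [hF, harg, hsign, pow_succ]
      rw [← add_smul]; ring_nf; simp
    · simp only [dif_neg h]
      have h' : (a : ℕ) ≤ (b : ℕ) := by omega
      have ha' : ((⟨(a : ℕ), by omega⟩ : Fin (k+1)) : ℕ) < ((b.succ : Fin (k+2)) : ℕ) := by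
        simp; omega
      have hne : (b.succ : Fin (k+2)) ≠ 0 := ha0 _ _ ha'
      have harg : (fun c => t ((b.succ).succAbove
            ((⟨(a : ℕ), by omega⟩ : Fin (k+1)).succAbove c))) =
          (fun c => t (a.succAbove (b.succAbove c))) := by
        funext c
        apply congrArg
        apply Fin.ext
        simp only [val_succAbove', Fin.val_succ, Fin.coe_castSucc, Fin.coe_pred]
        split_ifs <;> omega
      have hsign : ((b.succ : Fin (k+2)) : ℕ) + ((⟨(a : ℕ), by omega⟩ : Fin (k+1)) : ℕ)
          = ((a : ℕ) + (b : ℕ)) + 1 := by simp; omega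
      simp only [hF, harg, hsign, pow_succ]
      rw [← add_smul]; ring_nf; simp
  · rintro ⟨a, b⟩ _ _
    by_cases h : (b : ℕ) < (a : ℕ)
    · simp only [dif_pos h]
      intro hc
      have := congrArg (fun p => (p.1 : ℕ)) hc
      simp at this; omega
    · simp only [dif_neg h]
      intro hc
      have := congrArg (fun p => (p.1 : ℕ)) hc
      simp at this; omega
  · intro a ha; exact Finset.mem_univ _
  · rintro ⟨a, b⟩ _
    by_cases h : (b : ℕ) < (a : ℕ)
    · simp only [dif_pos h]
      have h2 : ¬ (((a.pred (ha0 a b h)) : ℕ) < ((b.castSucc : Fin (k+2)) : ℕ)) := by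
        simp; omega
      simp only [dif_neg h2]
      ext <;> simp <;> omega
    · simp only [dif_neg h]
      have h2 : ((⟨(a : ℕ), by omega⟩ : Fin (k+1)) : ℕ) < ((b.succ : Fin (k+2)) : ℕ) := by
        simp; omega
      simp only [dif_pos h2]
      ext <;> simp

/-- **Acyclicity of the complex of increments.**
(i) `δ∘δ = 0` on `𝒞_k(V)`; (ii) every `(k+1)`-increment which is a cocycle is the
coboundary of a `k`-increment. -/
theorem stmt12
    {V : Type*} [NormedAddCommGroup V] [NormedSpace ℝ V]
    (T : ℝ) (hT : 0 < T) (k : ℕ) (hk : 1 ≤ k) :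
    (∀ g : (Fin k → ℝ) → V, IsIncrement T k g →
      ∀ t ∈ cube T (k + 2), cob (cob g) t = 0) ∧
    (∀ h : (Fin (k + 1) → ℝ) → V, IsIncrement T (k + 1) h →
      (∀ t ∈ cube T (k + 2), cob h t = 0) →
      ∃ g : (Fin k → ℝ) → V, IsIncrement T k g ∧
        ∀ t ∈ cube T (k + 1), cob g t = h t) := by
  constructor
  · intro g _ t _; exact cob_cob g t
  · intro h hinc hco
    refine ⟨fun u => h (Fin.cons 0 u), ⟨?_, ?_⟩, ?_⟩
    · -- continuity
      have hmap : Set.MapsTo (fun u : Fin k → ℝ => Fin.cons 0 u) (cube T k) (cube T (k+1)) := by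
        intro u hu j
        refine Fin.cases ?_ ?_ j
        · simpa [Fin.cons] using hT.le
        · intro c; simpa using hu c
      have hcont : Continuous (fun u : Fin k → ℝ => (Fin.cons 0 u : Fin (k+1) → ℝ)) := by
        apply continuous_pi
        intro j
        refine Fin.cases ?_ ?_ j
        · simpa using continuous_const
        · intro c; simpa using continuous_apply c
      exact hinc.1.comp hcont.continuousOn hmap
    · -- vanishing
      intro u hu ⟨i, j, hij, hval⟩
      apply hinc.2 (Fin.cons 0 u)
      · intro m
        refine Fin.cases ?_ ?_ m
        · simpa [Fin.cons] using hT.le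
        · intro c; simpa using hu c
      · exact ⟨i.succ, j.succ, by simp [hij], by simpa using hval⟩
    · -- cob g = h
      intro t ht
      have hs : Fin.cons 0 t ∈ cube T (k + 2) := by
        intro m
        refine Fin.cases ?_ ?_ m
        · simpa [Fin.cons] using hT.le
        · intro c; simpa using ht c
      set s : Fin (k+2) → ℝ := Fin.cons 0 t with hsdef
      have h0 := hco s hs
      rw [cob, Fin.sum_univ_succ] at h0
      have hfirst : (fun j => s ((0 : Fin (k+2)).succAbove j)) = t := by
        funext j; simp [hsdef, Fin.zero_succAbove]
      have hrest : ∀ i : Fin (k + 1),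
          (fun j => s ((i.succ).succAbove j)) =
            Fin.cons 0 (fun c => t (i.succAbove c)) := by
        intro i
        funext j
        refine Fin.cases ?_ ?_ j
        · simp [hsdef]
        · intro c; simp [hsdef, Fin.succ_succAbove_succ]
      have hsum : ∑ i : Fin (k + 1), ((-1 : ℝ) ^ ((i.succ : Fin (k+2)) : ℕ)) •
            h (fun j => s ((i.succ).succAbove j))
          = - cob (fun u => h (Fin.cons 0 u)) t := by
        rw [cob, ← Finset.sum_neg_distrib]
        apply Finset.sum_congr rfl
        intro i _
        rw [hrest i]
        simp [Fin.val_succ, pow_succ]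
      rw [hfirst, hsum] at h0
      simp only [Fin.val_zero, pow_zero, one_smul] at h0
      rw [add_neg_eq_zero] at h0
      exact h0.symm
end

section
/- Let V be a Banach space, T > 0 and k ≥ 2, and let a ∈ 𝒞𝒞_{k,k}(V) satisfy δa = 0. Define σ₁ and σ₂ by fixing the first argument of the first (respectively second) group of variables to 0: (σ₁g)((s₁,…,s_{j−1}),τ) = g((0,s₁,…,s_{j−1}),τ) for g ∈ 𝒞𝒞_{j,l}(V), and symmetrically for σ₂, and set σ = σ₁σ₂. Then there exists q ∈ 𝒞𝒞_{k−1,k−1}(V) such that a = δq + δ₁(σ(δ₂a)) + δ₂(σ(δ₁a)); i.e. every k-bicocycle decomposes into a δ-coboundary plus a δ₁-coboundary plus a δ₂-coboundary. -/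
open Set

/-- Membership in `𝒞𝒞_{k,l}(V)`: continuity on `[0,T]^k × [0,T]^l` and vanishing
whenever two consecutive arguments in either group coincide. -/
def IsBiIncrement {V : Type*} [NormedAddCommGroup V] (T : ℝ) (k l : ℕ)
    (g : (Fin k → ℝ) → (Fin l → ℝ) → V) : Prop :=
  ContinuousOn (fun p : (Fin k → ℝ) × (Fin l → ℝ) => g p.1 p.2)
    ((cube T k) ×ˢ (cube T l)) ∧
  ∀ s ∈ cube T k, ∀ t ∈ cube T l,
    ((∃ i j : Fin k, (j : ℕ) = (i : ℕ) + 1 ∧ s i = s j) ∨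
     (∃ i j : Fin l, (j : ℕ) = (i : ℕ) + 1 ∧ t i = t j)) → g s t = 0

/-- The partial coboundary `δ₁` acting on the first group of arguments. -/
noncomputable def cob1 {V : Type*} [NormedAddCommGroup V] [NormedSpace ℝ V] {k l : ℕ}
    (g : (Fin k → ℝ) → (Fin l → ℝ) → V) : (Fin (k + 1) → ℝ) → (Fin l → ℝ) → V :=
  fun s t => ∑ i : Fin (k + 1), ((-1 : ℝ) ^ (i : ℕ)) • g (fun j => s (i.succAbove j)) t

/-- The partial coboundary `δ₂` acting on the second group of arguments. -/
noncomputable def cob2 {V : Type*} [NormedAddCommGroup V] [NormedSpace ℝ V] {k l : ℕ}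
    (g : (Fin k → ℝ) → (Fin l → ℝ) → V) : (Fin k → ℝ) → (Fin (l + 1) → ℝ) → V :=
  fun s t => ∑ i : Fin (l + 1), ((-1 : ℝ) ^ (i : ℕ)) • g s (fun j => t (i.succAbove j))

/-- `σ₁` fixes the first argument of the first group to `0`. -/
def sig1 {V : Type*} {k l : ℕ} (g : (Fin (k + 1) → ℝ) → (Fin l → ℝ) → V) :
    (Fin k → ℝ) → (Fin l → ℝ) → V :=
  fun s t => g (Fin.cons 0 s) t

/-- `σ₂` fixes the first argument of the second group to `0`. -/
def sig2 {V : Type*} {k l : ℕ} (g : (Fin k → ℝ) → (Fin (l + 1) → ℝ) → V) :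
    (Fin k → ℝ) → (Fin l → ℝ) → V :=
  fun s t => g s (Fin.cons 0 t)


section Aux

variable {V : Type*} [NormedAddCommGroup V] [NormedSpace ℝ V]

lemma cons_mem_cube {T : ℝ} (hT : 0 ≤ T) {k : ℕ} {s : Fin k → ℝ} (hs : s ∈ cube T k) :
    (Fin.cons 0 s : Fin (k+1) → ℝ) ∈ cube T (k+1) := by
  intro j
  refine Fin.cases ?_ ?_ j
  · simp [hT]
  · intro m; simpa using hs m

lemma cons_zero_succAbove (k : ℕ) (s : Fin (k+1) → ℝ) (i : Fin (k+1)) :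
    (fun j => (Fin.cons 0 s : Fin (k+2) → ℝ) (i.succ.succAbove j)) =
      Fin.cons 0 (fun j => s (i.succAbove j)) := by
  funext m
  refine Fin.cases ?_ ?_ m
  · simp
  · intro m'; simp [Fin.succ_succAbove_succ]

lemma contr1 {k l : ℕ}
    (h : (Fin (k+1) → ℝ) → (Fin l → ℝ) → V) (s : Fin (k+1) → ℝ) (t : Fin l → ℝ) :
    h s t = cob1 (sig1 h) s t + sig1 (cob1 h) s t := by
  have this1 : sig1 (cob1 h) s t =
      h s t + ∑ i : Fin (k+1), ((-1:ℝ)^((i:ℕ)+1)) • h (Fin.cons 0 (fun j => s (i.succAbove j))) t := by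
    show cob1 h (Fin.cons 0 s) t = _
    unfold cob1
    rw [Fin.sum_univ_succ]
    congr 1
    · simp [Fin.succAbove_zero]
    · exact Finset.sum_congr rfl fun i _ => by rw [cons_zero_succAbove]; simp
  have h2 : (∑ i : Fin (k+1), ((-1:ℝ)^((i:ℕ)+1)) • h (Fin.cons 0 (fun j => s (i.succAbove j))) t)
      = - cob1 (sig1 h) s t := by
    unfold cob1 sig1
    rw [← Finset.sum_neg_distrib]
    exact Finset.sum_congr rfl fun i _ => by rw [pow_succ]; simp
  rw [this1, h2]
  abel

lemma contr2 {k l : ℕ}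
    (h : (Fin k → ℝ) → (Fin (l+1) → ℝ) → V) (s : Fin k → ℝ) (t : Fin (l+1) → ℝ) :
    h s t = cob2 (sig2 h) s t + sig2 (cob2 h) s t := by
  have this1 : sig2 (cob2 h) s t =
      h s t + ∑ i : Fin (l+1), ((-1:ℝ)^((i:ℕ)+1)) • h s (Fin.cons 0 (fun j => t (i.succAbove j))) := by
    show cob2 h s (Fin.cons 0 t) = _
    unfold cob2
    rw [Fin.sum_univ_succ]
    congr 1
    · simp [Fin.succAbove_zero]
    · exact Finset.sum_congr rfl fun i _ => by rw [cons_zero_succAbove]; simp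
  have h2 : (∑ i : Fin (l+1), ((-1:ℝ)^((i:ℕ)+1)) • h s (Fin.cons 0 (fun j => t (i.succAbove j))))
      = - cob2 (sig2 h) s t := by
    unfold cob2 sig2
    rw [← Finset.sum_neg_distrib]
    exact Finset.sum_congr rfl fun i _ => by rw [pow_succ]; simp
  rw [this1, h2]
  abel

lemma cob12_comm {k l : ℕ}
    (g : (Fin k → ℝ) → (Fin l → ℝ) → V) (s : Fin (k+1) → ℝ) (t : Fin (l+1) → ℝ) :
    cob1 (cob2 g) s t = cob2 (cob1 g) s t := by
  unfold cob1 cob2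
  simp only [Finset.smul_sum]
  rw [Finset.sum_comm]
  refine Finset.sum_congr rfl fun i _ => Finset.sum_congr rfl fun j _ => ?_
  rw [smul_smul, smul_smul, mul_comm]

end Aux

/-- **Decomposition of bicocycles.**
If `a ∈ 𝒞𝒞_{k,k}(V)` (here `k = n+1 ≥ 2`) satisfies `δa = 0`, then
`a = δq + δ₁(σ(δ₂a)) + δ₂(σ(δ₁a))` for some `q ∈ 𝒞𝒞_{k−1,k−1}(V)`, where `σ = σ₁σ₂`. -/
theorem stmt13
    {V : Type*} [NormedAddCommGroup V] [NormedSpace ℝ V]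
    (T : ℝ) (hT : 0 < T) (n : ℕ) (hn : 1 ≤ n)
    (a : (Fin (n + 1) → ℝ) → (Fin (n + 1) → ℝ) → V)
    (ha : IsBiIncrement T (n + 1) (n + 1) a)
    (hcocycle : ∀ s ∈ cube T (n + 2), ∀ t ∈ cube T (n + 2), cob1 (cob2 a) s t = 0) :
    ∃ q : (Fin n → ℝ) → (Fin n → ℝ) → V,
      IsBiIncrement T n n q ∧
      ∀ s ∈ cube T (n + 1), ∀ t ∈ cube T (n + 1),
        a s t = cob1 (cob2 q) s t
          + cob1 (sig1 (sig2 (cob2 a))) s t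
          + cob2 (sig2 (sig1 (cob1 a))) s t := by
  refine ⟨sig1 (sig2 a), ⟨?_, ?_⟩, ?_⟩
  · -- continuity
    have hc : Continuous (fun p : (Fin n → ℝ) × (Fin n → ℝ) =>
        ((Fin.cons 0 p.1 : Fin (n+1) → ℝ), (Fin.cons 0 p.2 : Fin (n+1) → ℝ))) := by
      refine Continuous.prodMk ?_ ?_
      · refine continuous_pi fun i => ?_
        refine Fin.cases ?_ ?_ i
        · simpa using continuous_const
        · intro m
          simpa using (continuous_apply m).comp' continuous_fst
      · refine continuous_pi fun i => ?_
        refine Fin.cases ?_ ?_ i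
        · simpa using continuous_const
        · intro m
          simpa using (continuous_apply m).comp' continuous_snd
    refine ContinuousOn.comp ha.1 hc.continuousOn ?_
    rintro ⟨s, t⟩ ⟨hs, ht⟩
    exact ⟨cons_mem_cube hT.le hs, cons_mem_cube hT.le ht⟩
  · -- vanishing
    intro s hs t ht hcase
    show a (Fin.cons 0 s) (Fin.cons 0 t) = 0
    refine ha.2 _ (cons_mem_cube hT.le hs) _ (cons_mem_cube hT.le ht) ?_
    rcases hcase with ⟨i, j, hij, hval⟩ | ⟨i, j, hij, hval⟩
    · exact Or.inl ⟨i.succ, j.succ, by simp [hij], by simpa using hval⟩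
    · exact Or.inr ⟨i.succ, j.succ, by simp [hij], by simpa using hval⟩
  · intro s hs t ht
    have e0 := contr2 a s t
    have e1 := contr1 (cob2 (sig2 a)) s t
    have e2 := contr1 (sig2 (cob2 a)) s t
    have idA : cob1 (sig1 (cob2 (sig2 a))) s t = cob1 (cob2 (sig1 (sig2 a))) s t := rfl
    have idB : sig1 (cob1 (cob2 (sig2 a))) s t = cob2 (sig2 (sig1 (cob1 a))) s t := by
      show cob1 (cob2 (sig2 a)) (Fin.cons 0 s) t = _
      rw [cob12_comm (sig2 a) (Fin.cons 0 s) t]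
      rfl
    have idD : sig1 (cob1 (sig2 (cob2 a))) s t = 0 := by
      show cob1 (cob2 a) (Fin.cons 0 s) (Fin.cons 0 t) = 0
      exact hcocycle _ (cons_mem_cube hT.le hs) _ (cons_mem_cube hT.le ht)
    rw [e0, e1, e2, idA, idB, idD]
    abel
end

section
/- Let φ ∈ C³(ℝ) and a,b,c,d ∈ ℝ. Set Δ = d − c − b + a, Δ₁ = b − a, Δ₂ = c − a, Δ₁′ = d − c, Δ₂′ = d − b, and define ν = −φ′(a)Δ − φ″(a)(½(d² − c² − b² + a²) − aΔ) + (∫₀¹ φ′(a + sΔ₁) ds)·Δ + (∫₀¹ φ″(a + sΔ₁) ds)·Δ₂Δ₁′ + (∫₀¹ φ″(a + sΔ₁)·s ds)·ΔΔ₁′ − (φ′(b) − φ′(a) − φ″(a)Δ₁)·Δ₂′. Then there is a universal constant C, independent of φ and of a,b,c,d, such that |ν| ≤ C ( sup_{ξ∈I} |φ″(ξ)| · Δ² + sup_{ξ∈I} |φ‴(ξ)| · |Δ₁ Δ₂ Δ| ), where I is the closed interval with endpoints a and b. -/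
open Set intervalIntegral

set_option maxHeartbeats 1000000 in
/-- **A quantitative Taylor-type bound (Lemma on `ν₁`).**
For `φ ∈ C³(ℝ)` and corner values `a,b,c,d`, the quantity `ν` defined below satisfies
`|ν| ≤ C (sup_{ξ∈I} |φ″(ξ)| Δ² + sup_{ξ∈I} |φ‴(ξ)| |Δ₁Δ₂Δ|)` where `I` is the closed
interval with endpoints `a` and `b`, with a universal constant `C`. -/
theorem stmt18 :
    ∃ C : ℝ, ∀ (φ : ℝ → ℝ), ContDiff ℝ 3 φ → ∀ a b c d : ℝ,
      |(-(deriv φ a) * (d - c - b + a)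
          - deriv (deriv φ) a * ((d ^ 2 - c ^ 2 - b ^ 2 + a ^ 2) / 2
              - a * (d - c - b + a))
          + (∫ s in (0:ℝ)..1, deriv φ (a + s * (b - a))) * (d - c - b + a)
          + (∫ s in (0:ℝ)..1, deriv (deriv φ) (a + s * (b - a))) * ((c - a) * (d - c))
          + (∫ s in (0:ℝ)..1, deriv (deriv φ) (a + s * (b - a)) * s)
              * ((d - c - b + a) * (d - c))
          - (deriv φ b - deriv φ a - deriv (deriv φ) a * (b - a)) * (d - b))|
        ≤ C * (sSup {r : ℝ | ∃ ξ ∈ Set.uIcc a b, r = |deriv (deriv φ) ξ|}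
                * (d - c - b + a) ^ 2
              + sSup {r : ℝ | ∃ ξ ∈ Set.uIcc a b, r = |deriv (deriv (deriv φ)) ξ|}
                * |(b - a) * (c - a) * (d - c - b + a)|) := by
  refine ⟨2, ?_⟩
  intro φ hφ a b c d
  -- regularity
  have h3 : ContDiff ℝ ((2:ℕ)+1) φ := by exact_mod_cast hφ
  have hφ1 : ContDiff ℝ 2 (deriv φ) := ((contDiff_succ_iff_deriv.mp h3).2).2
  have h2 : ContDiff ℝ ((1:ℕ)+1) (deriv φ) := by exact_mod_cast hφ1
  have hφ2 : ContDiff ℝ 1 (deriv (deriv φ)) := ((contDiff_succ_iff_deriv.mp h2).2).2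
  have hc1 : Continuous (deriv φ) := hφ1.continuous
  have hc2 : Continuous (deriv (deriv φ)) := hφ2.continuous
  have hc3 : Continuous (deriv (deriv (deriv φ))) := hφ2.continuous_deriv le_rfl
  have hd1 : Differentiable ℝ (deriv φ) := hφ1.differentiable (by norm_num)
  have hd2 : Differentiable ℝ (deriv (deriv φ)) := hφ2.differentiable (by norm_num)
  -- notation
  set Y := ∫ s in (0:ℝ)..1, deriv (deriv φ) (a + s * (b - a)) with hYdef
  set Z := ∫ s in (0:ℝ)..1, deriv (deriv φ) (a + s * (b - a)) * s with hZdef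
  set I1 := ∫ s in (0:ℝ)..1, deriv φ (a + s * (b - a)) with hI1def
  set M2 := sSup {r : ℝ | ∃ ξ ∈ Set.uIcc a b, r = |deriv (deriv φ) ξ|} with hM2def
  set M3 := sSup {r : ℝ | ∃ ξ ∈ Set.uIcc a b, r = |deriv (deriv (deriv φ)) ξ|} with hM3def
  -- the affine map
  have hu : Continuous (fun s : ℝ => a + s * (b - a)) := by continuity
  have hudar : ∀ s : ℝ, HasDerivAt (fun s : ℝ => a + s * (b - a)) (b - a) s := by
    intro s
    simpa using ((hasDerivAt_id s).mul_const (b - a)).const_add a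
  -- interval integrability
  have hi1 : IntervalIntegrable (fun s => deriv φ (a + s * (b - a))) MeasureTheory.volume 0 1 :=
    (hc1.comp hu).intervalIntegrable 0 1
  have hi2 : IntervalIntegrable (fun s => deriv (deriv φ) (a + s * (b - a)))
      MeasureTheory.volume 0 1 := (hc2.comp hu).intervalIntegrable 0 1
  have hi2s : IntervalIntegrable (fun s => deriv (deriv φ) (a + s * (b - a)) * s)
      MeasureTheory.volume 0 1 := ((hc2.comp hu).mul continuous_id).intervalIntegrable 0 1
  -- FTC 1 : deriv φ b = deriv φ a + (b - a) * Y
  have hB : deriv φ b = deriv φ a + (b - a) * Y := by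
    have hder : ∀ s ∈ Set.uIcc (0:ℝ) 1, HasDerivAt (fun s : ℝ => deriv φ (a + s * (b - a)))
        (deriv (deriv φ) (a + s * (b - a)) * (b - a)) s := by
      intro s _
      exact ((hd1 (a + s * (b - a))).hasDerivAt).comp s (hudar s)
    have hint : IntervalIntegrable (fun s => deriv (deriv φ) (a + s * (b - a)) * (b - a))
        MeasureTheory.volume 0 1 := ((hc2.comp hu).mul continuous_const).intervalIntegrable 0 1
    have := intervalIntegral.integral_eq_sub_of_hasDerivAt hder hint
    rw [intervalIntegral.integral_mul_const] at this
    have e1 : a + (1:ℝ) * (b - a) = b := by ring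
    have e0 : a + (0:ℝ) * (b - a) = a := by ring
    rw [e1, e0] at this
    rw [← hYdef] at this
    linarith [this]
  -- FTC 2 : I1 = deriv φ a + (b - a) * (Y - Z)
  have hX : I1 = deriv φ a + (b - a) * (Y - Z) := by
    have hder : ∀ s ∈ Set.uIcc (0:ℝ) 1,
        HasDerivAt (fun s : ℝ => (1 - s) * deriv φ (a + s * (b - a)))
        ((-1) * deriv φ (a + s * (b - a))
          + (1 - s) * (deriv (deriv φ) (a + s * (b - a)) * (b - a))) s := by
      intro s _
      have h1 : HasDerivAt (fun s : ℝ => (1:ℝ) - s) (-1) s := by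
        simpa using (hasDerivAt_id s).const_sub 1
      have h2 : HasDerivAt (fun s : ℝ => deriv φ (a + s * (b - a)))
          (deriv (deriv φ) (a + s * (b - a)) * (b - a)) s := by
        exact ((hd1 (a + s * (b - a))).hasDerivAt).comp s (hudar s)
      exact h1.mul h2
    have hint : IntervalIntegrable (fun s => (-1) * deriv φ (a + s * (b - a))
        + (1 - s) * (deriv (deriv φ) (a + s * (b - a)) * (b - a)))
        MeasureTheory.volume 0 1 := by
      apply Continuous.intervalIntegrable
      exact (continuous_const.mul (hc1.comp hu)).add
        ((continuous_const.sub continuous_id).mul ((hc2.comp hu).mul continuous_const))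
    have key := intervalIntegral.integral_eq_sub_of_hasDerivAt hder hint
    have e1 : ((1:ℝ) - 1) * deriv φ (a + (1:ℝ) * (b - a)) = 0 := by ring
    -- compute the integral of the sum
    have hintb : IntervalIntegrable (fun s => (1 - s) * (deriv (deriv φ) (a + s * (b - a)) * (b - a)))
        MeasureTheory.volume 0 1 := by
      apply Continuous.intervalIntegrable
      exact (continuous_const.sub continuous_id).mul ((hc2.comp hu).mul continuous_const)
    have hinta : IntervalIntegrable (fun s => (-1) * deriv φ (a + s * (b - a)))
        MeasureTheory.volume 0 1 := hi1.const_mul (-1)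
    rw [intervalIntegral.integral_add hinta hintb] at key
    rw [intervalIntegral.integral_const_mul] at key
    have hsplit : (∫ s in (0:ℝ)..1, (1 - s) * (deriv (deriv φ) (a + s * (b - a)) * (b - a)))
        = (Y - Z) * (b - a) := by
      have hcongr : ∀ s ∈ Set.uIcc (0:ℝ) 1,
          (1 - s) * (deriv (deriv φ) (a + s * (b - a)) * (b - a))
          = (deriv (deriv φ) (a + s * (b - a))
              - deriv (deriv φ) (a + s * (b - a)) * s) * (b - a) := by
        intro s _; ring
      rw [intervalIntegral.integral_congr hcongr, intervalIntegral.integral_mul_const,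
        intervalIntegral.integral_sub hi2 hi2s]
    rw [hsplit] at key
    have e0 : a + (0:ℝ) * (b - a) = a := by ring
    rw [e0] at key
    simp only [e1] at key
    rw [← hI1def] at key
    simp at key
    linarith [key]
  -- algebraic identity
  have hident : (-(deriv φ a) * (d - c - b + a)
          - deriv (deriv φ) a * ((d ^ 2 - c ^ 2 - b ^ 2 + a ^ 2) / 2
              - a * (d - c - b + a))
          + I1 * (d - c - b + a)
          + Y * ((c - a) * (d - c))
          + Z * ((d - c - b + a) * (d - c))
          - (deriv φ b - deriv φ a - deriv (deriv φ) a * (b - a)) * (d - b))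
      = (Y - deriv (deriv φ) a) * ((c - a) * (d - c - b + a))
        + (Z - deriv (deriv φ) a / 2) * (d - c - b + a) ^ 2 := by
    rw [hX, hB]; ring
  rw [hident]
  -- sup bounds
  have hbdd2 : BddAbove {r : ℝ | ∃ ξ ∈ Set.uIcc a b, r = |deriv (deriv φ) ξ|} := by
    have : {r : ℝ | ∃ ξ ∈ Set.uIcc a b, r = |deriv (deriv φ) ξ|}
        = (fun ξ => |deriv (deriv φ) ξ|) '' Set.uIcc a b := by
      ext r; simp [Set.mem_image, eq_comm]
    rw [this]
    exact (isCompact_uIcc.image (continuous_abs.comp hc2)).bddAbove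
  have hbdd3 : BddAbove {r : ℝ | ∃ ξ ∈ Set.uIcc a b, r = |deriv (deriv (deriv φ)) ξ|} := by
    have : {r : ℝ | ∃ ξ ∈ Set.uIcc a b, r = |deriv (deriv (deriv φ)) ξ|}
        = (fun ξ => |deriv (deriv (deriv φ)) ξ|) '' Set.uIcc a b := by
      ext r; simp [Set.mem_image, eq_comm]
    rw [this]
    exact (isCompact_uIcc.image (continuous_abs.comp hc3)).bddAbove
  have hM2 : ∀ x ∈ Set.uIcc a b, |deriv (deriv φ) x| ≤ M2 := fun x hx =>
    le_csSup hbdd2 ⟨x, hx, rfl⟩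
  have hM3 : ∀ x ∈ Set.uIcc a b, |deriv (deriv (deriv φ)) x| ≤ M3 := fun x hx =>
    le_csSup hbdd3 ⟨x, hx, rfl⟩
  have hM2nn : 0 ≤ M2 := le_trans (abs_nonneg _) (hM2 a Set.left_mem_uIcc)
  have hM3nn : 0 ≤ M3 := le_trans (abs_nonneg _) (hM3 a Set.left_mem_uIcc)
  -- membership of the affine path
  have hmem : ∀ s : ℝ, s ∈ Set.Icc (0:ℝ) 1 → a + s * (b - a) ∈ Set.uIcc a b := by
    intro s hs
    simpa [smul_eq_mul] using
      (convex_uIcc a b).add_smul_sub_mem Set.left_mem_uIcc Set.right_mem_uIcc hs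
  -- Lipschitz bound for deriv (deriv φ) on uIcc a b
  have hlip : ∀ x ∈ Set.uIcc a b, |deriv (deriv φ) x - deriv (deriv φ) a| ≤ M3 * |x - a| := by
    intro x hx
    have := (convex_uIcc a b).norm_image_sub_le_of_norm_deriv_le
      (fun y _ => hd2 y)
      (fun y hy => by simpa [Real.norm_eq_abs] using hM3 y hy)
      Set.left_mem_uIcc hx
    simpa [Real.norm_eq_abs] using this
  -- bound |Y - f2 a| ≤ M3 * |b - a|
  have hYb : |Y - deriv (deriv φ) a| ≤ M3 * |b - a| := by
    have heq : Y - deriv (deriv φ) a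
        = ∫ s in (0:ℝ)..1, (deriv (deriv φ) (a + s * (b - a)) - deriv (deriv φ) a) := by
      rw [intervalIntegral.integral_sub hi2 (intervalIntegrable_const)]
      simp
      exact hYdef
    rw [heq]
    have := intervalIntegral.norm_integral_le_of_norm_le_const
      (C := M3 * |b - a|)
      (f := fun s => deriv (deriv φ) (a + s * (b - a)) - deriv (deriv φ) a)
      (a := 0) (b := 1) ?_
    · simpa [Real.norm_eq_abs] using this
    · intro s hs
      rw [Set.uIoc_of_le (by norm_num : (0:ℝ) ≤ 1)] at hs
      have hs01 : s ∈ Set.Icc (0:ℝ) 1 := ⟨le_of_lt hs.1, hs.2⟩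
      have h1 := hlip (a + s * (b - a)) (hmem s hs01)
      have h2 : |a + s * (b - a) - a| = s * |b - a| := by
        have : a + s * (b - a) - a = s * (b - a) := by ring
        rw [this, abs_mul, abs_of_nonneg hs01.1]
      rw [h2] at h1
      have h3 : M3 * (s * |b - a|) ≤ M3 * |b - a| := by
        have : s * |b - a| ≤ 1 * |b - a| :=
          mul_le_mul_of_nonneg_right hs01.2 (abs_nonneg _)
        nlinarith [abs_nonneg (b - a)]
      calc ‖deriv (deriv φ) (a + s * (b - a)) - deriv (deriv φ) a‖
          = |deriv (deriv φ) (a + s * (b - a)) - deriv (deriv φ) a| := Real.norm_eq_abs _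
        _ ≤ M3 * (s * |b - a|) := h1
        _ ≤ M3 * |b - a| := h3
  -- bound |Z| ≤ M2
  have hZb : |Z| ≤ M2 := by
    have := intervalIntegral.norm_integral_le_of_norm_le_const
      (C := M2) (f := fun s => deriv (deriv φ) (a + s * (b - a)) * s) (a := 0) (b := 1) ?_
    · simpa [Real.norm_eq_abs] using this
    · intro s hs
      rw [Set.uIoc_of_le (by norm_num : (0:ℝ) ≤ 1)] at hs
      have hs01 : s ∈ Set.Icc (0:ℝ) 1 := ⟨le_of_lt hs.1, hs.2⟩
      have h1 := hM2 (a + s * (b - a)) (hmem s hs01)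
      have : ‖deriv (deriv φ) (a + s * (b - a)) * s‖
          = |deriv (deriv φ) (a + s * (b - a))| * |s| := by
        rw [Real.norm_eq_abs, abs_mul]
      rw [this, abs_of_nonneg hs01.1]
      nlinarith [abs_nonneg (deriv (deriv φ) (a + s * (b - a))), hs01.2]
  have hfa : |deriv (deriv φ) a| ≤ M2 := hM2 a Set.left_mem_uIcc
  -- final estimates
  have habs1 : |(Y - deriv (deriv φ) a) * ((c - a) * (d - c - b + a))|
      = |Y - deriv (deriv φ) a| * (|c - a| * |d - c - b + a|) := by
    rw [abs_mul, abs_mul]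
  have habs2 : |(Z - deriv (deriv φ) a / 2) * (d - c - b + a) ^ 2|
      = |Z - deriv (deriv φ) a / 2| * |d - c - b + a| ^ 2 := by
    rw [abs_mul, abs_pow]
  have habs3 : |(b - a) * (c - a) * (d - c - b + a)|
      = |b - a| * (|c - a| * |d - c - b + a|) := by
    rw [abs_mul, abs_mul]; ring
  have hsq : (d - c - b + a) ^ 2 = |d - c - b + a| ^ 2 := (sq_abs _).symm
  have hZ2 : |Z - deriv (deriv φ) a / 2| ≤ 3 / 2 * M2 := by
    have := abs_sub (Z) (deriv (deriv φ) a / 2)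
    have h4 : |deriv (deriv φ) a / 2| = |deriv (deriv φ) a| / 2 := by
      rw [abs_div]; norm_num
    calc |Z - deriv (deriv φ) a / 2| ≤ |Z| + |deriv (deriv φ) a / 2| := abs_sub _ _
      _ ≤ M2 + M2 / 2 := by rw [h4]; linarith [hfa, hZb]
      _ = 3 / 2 * M2 := by ring
  calc |(Y - deriv (deriv φ) a) * ((c - a) * (d - c - b + a))
        + (Z - deriv (deriv φ) a / 2) * (d - c - b + a) ^ 2|
      ≤ |(Y - deriv (deriv φ) a) * ((c - a) * (d - c - b + a))|
        + |(Z - deriv (deriv φ) a / 2) * (d - c - b + a) ^ 2| := abs_add_le _ _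
    _ ≤ 2 * (M2 * (d - c - b + a) ^ 2 + M3 * |(b - a) * (c - a) * (d - c - b + a)|) := by
        rw [habs1, habs2, habs3, hsq]
        have t1 : |Y - deriv (deriv φ) a| * (|c - a| * |d - c - b + a|)
            ≤ (M3 * |b - a|) * (|c - a| * |d - c - b + a|) :=
          mul_le_mul_of_nonneg_right hYb (by positivity)
        have t2 : |Z - deriv (deriv φ) a / 2| * |d - c - b + a| ^ 2
            ≤ (3 / 2 * M2) * |d - c - b + a| ^ 2 :=
          mul_le_mul_of_nonneg_right hZ2 (by positivity)
        have p1 : 0 ≤ M2 * |d - c - b + a| ^ 2 := by positivity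
        have p2 : 0 ≤ M3 * (|b - a| * (|c - a| * |d - c - b + a|)) := by positivity
        nlinarith [t1, t2, p1, p2]
end
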